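/- For integers d ≥ 1 and 0 ≤ k ≤ d-1, the Lebesgue volume of the slab of the unit cube {y ∈ [0,1]^d : k ≤ ∑_{i=1}^d y_i ≤ k+1} equals A(d, k+1)/d!, where A(d,p) = ∑_{i=0}^p (-1)^i (d+1 choose i) (p-i)^d is the Eulerian number. -/

import Mathlib

/-- The Eulerian number `A(d,p) = ∑_{i=0}^p (-1)^i (d+1 choose i) (p-i)^d`. -/
def eulerianA (d p : ℕ) : ℤ :=
  ∑ i ∈ Finset.range (p + 1), (-1 : ℤ) ^ i * ((d + 1).choose i : ℤ) * ((p : ℤ) - (i : ℤ)) ^ d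

open MeasureTheory Finset

noncomputable def Fd (d : ℕ) (t : ℝ) : ℝ :=
  (∑ i ∈ Finset.range (d+1), (-1:ℝ)^i * (d.choose i) * (max (t - i) 0)^d) / d.factorial

def cubeSum (d : ℕ) (t : ℝ) : Set (Fin d → ℝ) :=
  {y | (∀ i, y i ∈ Set.Icc (0:ℝ) 1) ∧ ∑ i, y i ≤ t}

lemma continuous_Fd (d : ℕ) : Continuous (Fd d) := by
  unfold Fd
  apply Continuous.div_const
  exact continuous_finset_sum _ fun i _ => by fun_prop

-- relu pow derivative
lemma hasDerivAt_maxpow (n : ℕ) (hn : 1 ≤ n) (y : ℝ) :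
    HasDerivAt (fun x : ℝ => max x 0 ^ (n+1)) ((n+1) * max y 0 ^ n) y := by
  rcases lt_trichotomy y 0 with hy | rfl | hy
  · have h0 : HasDerivAt (fun _ : ℝ => (0:ℝ)) 0 y := hasDerivAt_const y 0
    have : ((n:ℝ)+1) * max y 0 ^ n = 0 := by
      rw [max_eq_right hy.le, zero_pow (by omega), mul_zero]
    rw [this]
    apply h0.congr_of_eventuallyEq
    filter_upwards [eventually_lt_nhds hy] with x hx
    rw [max_eq_right hx.le, zero_pow (by omega)]
  · have : ((n:ℝ)+1) * max (0:ℝ) 0 ^ n = 0 := by simp [zero_pow (by omega : n ≠ 0)]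
    rw [this]
    rw [hasDerivAt_iff_isLittleO]
    simp only [sub_zero, max_self, zero_pow (by omega : n + 1 ≠ 0), mul_zero, sub_zero]
    have hg : (fun x : ℝ => max x 0 ^ n) =o[nhds 0] (fun _ => (1:ℝ)) := by
      rw [Asymptotics.isLittleO_one_iff]
      have : Continuous (fun x : ℝ => max x 0 ^ n) := by fun_prop
      have h := this.tendsto 0
      simpa [zero_pow (by omega : n ≠ 0)] using h
    have := (Asymptotics.isBigO_refl (fun x : ℝ => x) (nhds 0)).mul_isLittleO hg
    simp only [mul_one] at this
    apply this.congr' _ (by rfl)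
    filter_upwards with x
    simp only [smul_zero, sub_zero]
    rcases le_total x 0 with h | h
    · simp [max_eq_right h, zero_pow (by omega : n + 1 ≠ 0), zero_pow (by omega : n ≠ 0)]
    · rw [max_eq_left h, pow_succ, mul_comm]
  · have h0 : HasDerivAt (fun x : ℝ => x ^ (n+1)) (((n:ℝ)+1) * y ^ n) y := by
      simpa using hasDerivAt_pow (n+1) y
    rw [max_eq_left hy.le]
    apply h0.congr_of_eventuallyEq
    filter_upwards [eventually_gt_nhds hy] with x hx
    rw [max_eq_left hx.le]

lemma integral_maxpow (n : ℕ) (hn : 1 ≤ n) (c : ℝ) :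
    ∫ x in (0:ℝ)..1, max (c - x) 0 ^ n
      = (max c 0 ^ (n+1) - max (c-1) 0 ^ (n+1)) / (n+1) := by
  have hder : ∀ x : ℝ, HasDerivAt (fun x => -(max (c - x) 0 ^ (n+1) / (n+1)))
      (max (c - x) 0 ^ n) x := by
    intro x
    have h1 : HasDerivAt (fun x : ℝ => c - x) (-1) x := by
      simpa using (hasDerivAt_id x).const_sub c
    have h2 := (hasDerivAt_maxpow n hn (c - x)).comp x h1
    have h3 := (h2.div_const ((n:ℝ)+1)).neg
    refine h3.congr_deriv ?_
    have : ((n:ℝ)+1) ≠ 0 := by positivity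
    field_simp
  have := intervalIntegral.integral_eq_sub_of_hasDerivAt (f := fun x => -(max (c - x) 0 ^ (n+1) / (n+1)))
    (fun x _ => hder x) (Continuous.intervalIntegrable (by fun_prop) 0 1)
  rw [this]
  simp only [sub_zero]
  ring

lemma pascal_sum (d : ℕ) (A : ℕ → ℝ) :
    ∑ i ∈ range (d+2), (-1:ℝ)^i * ((d+1).choose i) * A i
      = ∑ i ∈ range (d+1), (-1:ℝ)^i * (d.choose i) * (A i - A (i+1)) := by
  have e1 : ∑ i ∈ range (d+2), (-1:ℝ)^i * ((d+1).choose i) * A i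
      = (∑ i ∈ range (d+1), (-1:ℝ)^(i+1) * ((d+1).choose (i+1)) * A (i+1)) + A 0 := by
    rw [Finset.sum_range_succ']; simp
  have e2 : ∑ i ∈ range (d+2), (-1:ℝ)^i * (d.choose i) * A i
      = (∑ i ∈ range (d+1), (-1:ℝ)^(i+1) * (d.choose (i+1)) * A (i+1)) + A 0 := by
    rw [Finset.sum_range_succ']; simp
  have e3 : ∑ i ∈ range (d+2), (-1:ℝ)^i * (d.choose i) * A i
      = ∑ i ∈ range (d+1), (-1:ℝ)^i * (d.choose i) * A i := by
    rw [Finset.sum_range_succ, Nat.choose_succ_self]; simp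
  have e5 : (∑ i ∈ range (d+1), (-1:ℝ)^(i+1) * (d.choose (i+1)) * A (i+1)) + A 0
      = ∑ i ∈ range (d+1), (-1:ℝ)^i * (d.choose i) * A i := e2.symm.trans e3
  have hsplit : ∀ i ∈ range (d+1), (-1:ℝ)^(i+1) * ((d+1).choose (i+1)) * A (i+1)
      = (-1:ℝ)^(i+1) * (d.choose i) * A (i+1) + (-1:ℝ)^(i+1) * (d.choose (i+1)) * A (i+1) := by
    intro i _; rw [Nat.choose_succ_succ]; push_cast; ring
  rw [e1, Finset.sum_congr rfl hsplit, Finset.sum_add_distrib]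
  have e4 : ∑ i ∈ range (d+1), (-1:ℝ)^(i+1) * (d.choose i) * A (i+1)
      = - ∑ i ∈ range (d+1), (-1:ℝ)^i * (d.choose i) * A (i+1) := by
    rw [← Finset.sum_neg_distrib]; apply Finset.sum_congr rfl; intro i _; ring
  have e6 : ∑ i ∈ range (d+1), (-1:ℝ)^i * (d.choose i) * (A i - A (i+1))
      = (∑ i ∈ range (d+1), (-1:ℝ)^i * (d.choose i) * A i)
        - ∑ i ∈ range (d+1), (-1:ℝ)^i * (d.choose i) * A (i+1) := by
    rw [← Finset.sum_sub_distrib]; apply Finset.sum_congr rfl; intro i _; ring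
  rw [e6, ← e5, e4]; ring

lemma Fd_succ (d : ℕ) (hd : 1 ≤ d) (t : ℝ) :
    ∫ x in (0:ℝ)..1, Fd d (t - x) = Fd (d+1) t := by
  unfold Fd
  rw [intervalIntegral.integral_div]
  rw [intervalIntegral.integral_finset_sum (fun i _ => Continuous.intervalIntegrable (by fun_prop) 0 1)]
  have key : ∀ i ∈ range (d+1),
      ∫ x in (0:ℝ)..1, (-1:ℝ)^i * (d.choose i) * (max (t - x - i) 0)^d
        = (-1:ℝ)^i * (d.choose i) *
          ((max (t - i) 0 ^ (d+1) - max (t - i - 1) 0 ^ (d+1)) / (d+1)) := by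
    intro i _
    rw [intervalIntegral.integral_const_mul]
    congr 1
    have : ∀ x : ℝ, max (t - x - i) 0 ^ d = max ((t - i) - x) 0 ^ d := by
      intro x; ring_nf
    simp only [this]
    exact integral_maxpow d hd (t - i)
  rw [Finset.sum_congr rfl key]
  have pas := pascal_sum d (fun i => max (t - i) 0 ^ (d+1))
  have hstep : ∀ i ∈ range (d+1),
      (-1:ℝ)^i * (d.choose i) * ((max (t - i) 0 ^ (d+1) - max (t - i - 1) 0 ^ (d+1)) / (d+1))
        = ((-1:ℝ)^i * (d.choose i) * ((fun j : ℕ => max (t - j) 0 ^ (d+1)) i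
            - (fun j : ℕ => max (t - j) 0 ^ (d+1)) (i+1))) / (d+1) := by
    intro i _
    have : (t - ((i:ℕ)+1 : ℕ)) = t - i - 1 := by push_cast; ring
    simp only [this]
    ring
  rw [Finset.sum_congr rfl hstep, ← Finset.sum_div, ← pas]
  rw [Nat.factorial_succ]
  push_cast
  field_simp

lemma measurableSet_cubeSum (d : ℕ) (t : ℝ) : MeasurableSet (cubeSum d t) := by
  have : cubeSum d t = (⋂ i, (fun y : Fin d → ℝ => y i) ⁻¹' Set.Icc 0 1)
      ∩ {y : Fin d → ℝ | ∑ i, y i ≤ t} := by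
    ext y; simp [cubeSum, Set.mem_iInter]
  rw [this]
  exact (MeasurableSet.iInter fun i =>
    (measurable_pi_apply i) measurableSet_Icc).inter
    (measurableSet_le (by fun_prop) measurable_const)

lemma Fd_one_eq (t : ℝ) : Fd 1 t = max t 0 - max (t - 1) 0 := by
  simp [Fd, Finset.sum_range_succ]
  ring

lemma Fd_nonneg_one (t : ℝ) : 0 ≤ Fd 1 t := by
  rw [Fd_one_eq]
  have : max (t - 1) 0 ≤ max t 0 := max_le_max (by linarith) le_rfl
  linarith

lemma base_case (t : ℝ) : volume (cubeSum 1 t) = ENNReal.ofReal (Fd 1 t) := by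
  have he : cubeSum 1 t = (MeasurableEquiv.funUnique (Fin 1) ℝ) ⁻¹' (Set.Icc 0 (min 1 t)) := by
    ext y
    simp only [cubeSum, Set.mem_setOf_eq, Set.mem_preimage, MeasurableEquiv.funUnique_apply,
      Fin.sum_univ_one, Set.mem_Icc, le_min_iff]
    constructor
    · rintro ⟨h1, h2⟩
      exact ⟨(h1 0).1, (h1 0).2, h2⟩
    · rintro ⟨h1, h2, h3⟩
      exact ⟨fun i => by fin_cases i; exact ⟨h1, h2⟩, h3⟩
  rw [he]
  erw [(volume_preserving_funUnique (Fin 1) ℝ).measure_preimage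
    measurableSet_Icc.nullMeasurableSet]
  rw [Real.volume_Icc, Fd_one_eq]
  rcases le_total t 0 with h | h
  · rw [max_eq_right h, max_eq_right (by linarith : t - 1 ≤ 0),
      ENNReal.ofReal_of_nonpos (by simpa using min_le_of_right_le h : (1:ℝ) ⊓ t - 0 ≤ 0)]
    simp
  · rcases le_total t 1 with h1 | h1
    · rw [min_eq_right h1, max_eq_left h, max_eq_right (by linarith : t - 1 ≤ 0)]
    · rw [min_eq_left h1, max_eq_left (by linarith : 0 ≤ t), max_eq_left (by linarith : 0 ≤ t - 1)]
      ring_nf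

lemma step_case (d : ℕ) (hd : 1 ≤ d)
    (IH : ∀ s, volume (cubeSum d s) = ENNReal.ofReal (Fd d s))
    (hnn : ∀ s, 0 ≤ Fd d s) (t : ℝ) :
    volume (cubeSum (d+1) t) = ENNReal.ofReal (Fd (d+1) t) := by
  set e := MeasurableEquiv.piFinSuccAbove (fun _ : Fin (d+1) => ℝ) 0 with he
  set T : Set (ℝ × (Fin d → ℝ)) :=
    {p | p.1 ∈ Set.Icc (0:ℝ) 1 ∧ (∀ i, p.2 i ∈ Set.Icc (0:ℝ) 1) ∧ p.1 + ∑ i, p.2 i ≤ t} with hTdef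
  have hT : MeasurableSet T := by
    have : T = (Prod.fst ⁻¹' Set.Icc (0:ℝ) 1)
        ∩ ((⋂ i, (fun p : ℝ × (Fin d → ℝ) => p.2 i) ⁻¹' Set.Icc (0:ℝ) 1)
        ∩ {p : ℝ × (Fin d → ℝ) | p.1 + ∑ i, p.2 i ≤ t}) := by
      ext p; simp [hTdef, Set.mem_iInter]
    rw [this]
    exact (measurable_fst measurableSet_Icc).inter
      ((MeasurableSet.iInter fun i => ((measurable_pi_apply i).comp measurable_snd)
        measurableSet_Icc).inter (measurableSet_le (by fun_prop) measurable_const))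
  have hpre : cubeSum (d+1) t = e ⁻¹' T := by
    ext y
    simp only [cubeSum, Set.mem_setOf_eq, Set.mem_preimage, he,
      MeasurableEquiv.piFinSuccAbove_apply, hTdef, Fin.removeNth, Fin.zero_succAbove,
      Fin.sum_univ_succ, Fin.forall_fin_succ]
    constructor
    · rintro ⟨⟨h0, hs⟩, hsum⟩; exact ⟨h0, hs, hsum⟩
    · rintro ⟨h0, hs, hsum⟩; exact ⟨⟨h0, hs⟩, hsum⟩
  rw [hpre, (volume_preserving_piFinSuccAbove (fun _ : Fin (d+1) => ℝ) 0).measure_preimage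
    hT.nullMeasurableSet]
  rw [Measure.volume_eq_prod, Measure.prod_apply hT]
  have hslice : ∀ x : ℝ, volume (Prod.mk x ⁻¹' T)
      = Set.indicator (Set.Icc (0:ℝ) 1) (fun x => ENNReal.ofReal (Fd d (t - x))) x := by
    intro x
    by_cases hx : x ∈ Set.Icc (0:ℝ) 1
    · have : Prod.mk x ⁻¹' T = cubeSum d (t - x) := by
        ext z
        simp only [Set.mem_preimage, hTdef, Set.mem_setOf_eq, cubeSum, hx, true_and]
        rw [le_sub_iff_add_le']
      rw [this, IH, Set.indicator_of_mem hx]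
    · have : Prod.mk x ⁻¹' T = ∅ := by
        ext z
        simp only [Set.mem_preimage, hTdef, Set.mem_setOf_eq, Set.mem_empty_iff_false, iff_false]
        rintro ⟨h1, -, -⟩
        exact hx h1
      rw [this, Set.indicator_of_notMem hx, measure_empty]
  rw [lintegral_congr hslice, lintegral_indicator measurableSet_Icc]
  have hcont : Continuous (fun x : ℝ => Fd d (t - x)) :=
    (continuous_Fd d).comp (by fun_prop)
  rw [← ofReal_integral_eq_lintegral_ofReal (hcont.integrableOn_Icc)
    (ae_of_all _ fun x => hnn (t - x))]
  rw [MeasureTheory.integral_Icc_eq_integral_Ioc,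
    ← intervalIntegral.integral_of_le zero_le_one, Fd_succ d hd t]

lemma main_lemma (d : ℕ) (hd : 1 ≤ d) :
    (∀ t, volume (cubeSum d t) = ENNReal.ofReal (Fd d t)) ∧ (∀ t, 0 ≤ Fd d t) := by
  induction d, hd using Nat.le_induction with
  | base => exact ⟨base_case, Fd_nonneg_one⟩
  | succ d hd IH =>
    refine ⟨step_case d hd IH.1 IH.2, fun t => ?_⟩
    rw [← Fd_succ d hd t]
    apply intervalIntegral.integral_nonneg zero_le_one
    intro x _
    exact IH.2 (t - x)

lemma hyper_null (d : ℕ) (hd : 1 ≤ d) (c : ℝ) :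
    volume {y : Fin d → ℝ | ∑ i, y i = c} = 0 := by
  set L : (Fin d → ℝ) →ₗ[ℝ] ℝ := ∑ i, LinearMap.proj i with hLdef
  have hL : ∀ y : Fin d → ℝ, L y = ∑ i, y i := fun y => by
    simp [hLdef, LinearMap.sum_apply]
  have hker : LinearMap.ker L ≠ ⊤ := by
    rw [Ne, LinearMap.ker_eq_top]
    intro h
    have h1 : L (fun _ => (1:ℝ)) = 0 := by rw [h]; rfl
    rw [hL] at h1
    simp at h1
    omega
  set y0 : Fin d → ℝ := fun _ => c / d with hy0def
  have hy0 : ∑ i : Fin d, y0 i = c := by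
    have hd0 : (d:ℝ) ≠ 0 := Nat.cast_ne_zero.mpr (by omega)
    simp only [hy0def, Finset.sum_const, Finset.card_univ, Fintype.card_fin, nsmul_eq_mul]
    field_simp
  have hset : {y : Fin d → ℝ | ∑ i, y i = c}
      = (fun y : Fin d → ℝ => y + (-y0)) ⁻¹' (LinearMap.ker L : Set (Fin d → ℝ)) := by
    ext y
    simp only [Set.mem_setOf_eq, Set.mem_preimage, SetLike.mem_coe, LinearMap.mem_ker, hL,
      Pi.add_apply, Pi.neg_apply, Finset.sum_add_distrib, Finset.sum_neg_distrib, hy0]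
    constructor
    · intro h; rw [h]; ring
    · intro h; linarith
  rw [hset, measure_preimage_add_right]
  exact Measure.addHaar_submodule volume _ hker

lemma sum_max_trunc (n e : ℕ) (he : 1 ≤ e) (m : ℕ) (hm : m ≤ n) (c : ℕ → ℝ) :
    ∑ i ∈ range (n+1), c i * max ((m:ℝ) - i) 0 ^ e
      = ∑ i ∈ range (m+1), c i * ((m:ℝ) - i) ^ e := by
  rw [← Finset.sum_subset (Finset.range_subset_range.mpr (by omega : m + 1 ≤ n + 1))]
  · apply Finset.sum_congr rfl
    intro i hi
    have hi' : i ≤ m := Nat.lt_succ_iff.mp (Finset.mem_range.mp hi)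
    have : (i:ℝ) ≤ m := by exact_mod_cast hi'
    rw [max_eq_left (by linarith)]
  · intro i _ hni
    have hmi : m < i := by
      by_contra h
      exact hni (Finset.mem_range.mpr (by omega))
    have : (m:ℝ) - i ≤ 0 := by
      have : (m:ℝ) < i := by exact_mod_cast hmi
      linarith
    rw [max_eq_right this, zero_pow (by omega), mul_zero]

lemma final_arith (d k : ℕ) (hd : 1 ≤ d) (hk1 : k + 1 ≤ d) :
    Fd d ((k:ℝ)+1) - Fd d (k:ℝ) = (eulerianA d (k + 1) : ℝ) / (d.factorial : ℝ) := by
  unfold Fd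
  rw [div_sub_div_same]
  congr 1
  have h3 : (eulerianA d (k+1) : ℝ)
      = ∑ i ∈ range (d+2), (-1:ℝ)^i * ((d+1).choose i) * max (((k+1:ℕ):ℝ) - i) 0 ^ d := by
    rw [show d + 2 = (d+1) + 1 from rfl,
      sum_max_trunc (d+1) d hd (k+1) (by omega) (fun i => (-1:ℝ)^i * ((d+1).choose i))]
    rw [eulerianA]
    push_cast
    rfl
  have h4 : ((k+1:ℕ):ℝ) = (k:ℝ) + 1 := by push_cast; ring
  rw [h4] at h3
  rw [h3, pascal_sum d (fun i => max (((k:ℝ)+1) - i) 0 ^ d)]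
  have h5 : ∀ i ∈ range (d+1),
      (-1:ℝ)^i * (d.choose i) * (max ((k:ℝ)+1 - i) 0 ^ d - max ((k:ℝ)+1 - ((i+1:ℕ):ℝ)) 0 ^ d)
        = (-1:ℝ)^i * (d.choose i) * max ((k:ℝ)+1 - i) 0 ^ d
          - (-1:ℝ)^i * (d.choose i) * max ((k:ℝ) - i) 0 ^ d := by
    intro i _
    have hc : ((i+1:ℕ):ℝ) = (i:ℝ)+1 := by push_cast; ring
    rw [hc, show (k:ℝ)+1-((i:ℝ)+1) = (k:ℝ)-(i:ℝ) by ring]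
    ring
  rw [Finset.sum_congr rfl h5, Finset.sum_sub_distrib]

/-- The volume of the hypersimplex slab `{y ∈ [0,1]^d : k ≤ ∑ y_i ≤ k+1}`
equals `A(d, k+1)/d!`. -/
theorem stmt_4 (d k : ℕ) (hd : 1 ≤ d) (hk : k ≤ d - 1) :
    MeasureTheory.volume
        {y : Fin d → ℝ | (∀ i, y i ∈ Set.Icc (0 : ℝ) 1) ∧
          (k : ℝ) ≤ ∑ i, y i ∧ ∑ i, y i ≤ (k : ℝ) + 1}
      = ENNReal.ofReal ((eulerianA d (k + 1) : ℝ) / (d.factorial : ℝ)) := by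
  obtain ⟨hvol, hnn⟩ := main_lemma d hd
  have hk1 : k + 1 ≤ d := by omega
  set A : Set (Fin d → ℝ) :=
    {y | (∀ i, y i ∈ Set.Icc (0:ℝ) 1) ∧ ∑ i, y i < (k:ℝ)} with hAdef
  have hAmeas : MeasurableSet A := by
    have : A = (⋂ i, (fun y : Fin d → ℝ => y i) ⁻¹' Set.Icc 0 1)
        ∩ {y : Fin d → ℝ | ∑ i, y i < (k:ℝ)} := by
      ext y; simp [hAdef, Set.mem_iInter]
    rw [this]
    exact (MeasurableSet.iInter fun i =>
      (measurable_pi_apply i) measurableSet_Icc).inter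
      (measurableSet_lt (by fun_prop) measurable_const)
  have hAsub : A ⊆ cubeSum d ((k:ℝ)+1) := by
    rintro y ⟨h1, h2⟩
    exact ⟨h1, by linarith⟩
  have hAvol : volume A = ENNReal.ofReal (Fd d (k:ℝ)) := by
    apply le_antisymm
    · rw [← hvol (k:ℝ)]
      exact measure_mono fun y hy => ⟨hy.1, le_of_lt hy.2⟩
    · rw [← hvol (k:ℝ)]
      calc volume (cubeSum d (k:ℝ))
          ≤ volume (A ∪ {y : Fin d → ℝ | ∑ i, y i = (k:ℝ)}) := by
            apply measure_mono
            rintro y ⟨h1, h2⟩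
            rcases lt_or_eq_of_le h2 with h | h
            · exact Or.inl ⟨h1, h⟩
            · exact Or.inr h
        _ ≤ volume A + volume {y : Fin d → ℝ | ∑ i, y i = (k:ℝ)} := measure_union_le _ _
        _ = volume A := by rw [hyper_null d hd (k:ℝ), add_zero]
  have hset : {y : Fin d → ℝ | (∀ i, y i ∈ Set.Icc (0 : ℝ) 1) ∧
      (k : ℝ) ≤ ∑ i, y i ∧ ∑ i, y i ≤ (k : ℝ) + 1} = cubeSum d ((k:ℝ)+1) \ A := by
    ext y
    simp only [Set.mem_setOf_eq, Set.mem_diff, cubeSum, hAdef, not_and, not_lt]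
    constructor
    · rintro ⟨h1, h2, h3⟩
      exact ⟨⟨h1, h3⟩, fun _ => h2⟩
    · rintro ⟨⟨h1, h3⟩, h2⟩
      exact ⟨h1, h2 h1, h3⟩
  rw [hset, measure_diff hAsub hAmeas.nullMeasurableSet
    (by rw [hAvol]; exact ENNReal.ofReal_ne_top), hvol ((k:ℝ)+1), hAvol,
    ← ENNReal.ofReal_sub _ (hnn (k:ℝ)), final_arith d k hd hk1]
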